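/- The equation (Ψ^LΨ^L) holds: for all objects A₁, A₂, A₃, B₁, B₂ of C, the composite (Ψ^L_{A₁⊗A₃,A₂;B₁} ⊗ 1_{B₂}) ∘ Ψ^L_{A₁,A₃;(B₁⊗A₂)⊗B₂} equals the composite ((E(a⁻¹_{A₁,A₃,A₂}) ∘ E(1_{A₁} ⊗ c_{A₂,A₃}) ∘ E(a_{A₁,A₂,A₃})) ⊗ 1_{B₁⊗B₂}) ∘ Ψ^L_{A₁⊗A₂,A₃;B₁⊗B₂} ∘ (Ψ^L_{A₁,A₂;B₁} ⊗ 1_{B₂⊗A₃}), where on each side the unique structural coherence isomorphisms of C (built from a, l, r and their inverses) are inserted between the displayed factors so that the composites are well-typed morphisms with common source a bracketing of EA₁ ⊗ B₁ ⊗ A₂ ⊗ B₂ ⊗ A₃ and common target E((A₁⊗A₃)⊗A₂) ⊗ (B₁⊗B₂) (in Lean this can be expressed with monoidal coherent composition ⊗≫). -/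

import Mathlib

open CategoryTheory MonoidalCategory

open BraidedCategory in
set_option maxHeartbeats 4000000 in
theorem PsiLPsiL_aux {C : Type*} [Category C] [MonoidalCategory C] [SymmetricCategory C]
    (E : C ⥤ C)
    (ψL : ∀ A B : C, E.obj A ⊗ B ⟶ E.obj (A ⊗ B))
    (ψL_nat : ∀ {A A' B B' : C} (f : A ⟶ A') (g : B ⟶ B'),
      (E.map f ⊗ₘ g) ≫ ψL A' B' = ψL A B ≫ E.map (f ⊗ₘ g))
    (ψLa : ∀ A B C' : C,
      (ψL A B ⊗ₘ 𝟙 C') ≫ ψL (A ⊗ B) C' ≫ E.map (α_ A B C').hom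
        = (α_ (E.obj A) B C').hom ≫ ψL A (B ⊗ C'))
    (ΨL : ∀ A₁ A₂ B : C, (E.obj A₁ ⊗ B) ⊗ A₂ ⟶ E.obj (A₁ ⊗ A₂) ⊗ B)
    (hΨL : ∀ A₁ A₂ B : C,
      ΨL A₁ A₂ B = (α_ (E.obj A₁) B A₂).hom ≫
        (𝟙 (E.obj A₁) ⊗ₘ (β_ B A₂).hom) ≫
        (α_ (E.obj A₁) A₂ B).inv ≫ (ψL A₁ A₂ ⊗ₘ 𝟙 B))
    (A₁ A₂ A₃ B₁ B₂ : C) :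
      (𝟙 (E.obj A₁ ⊗ (B₁ ⊗ (A₂ ⊗ (B₂ ⊗ A₃)))) ⊗≫
        ΨL A₁ A₃ ((B₁ ⊗ A₂) ⊗ B₂) ⊗≫
        (ΨL (A₁ ⊗ A₃) A₂ B₁ ⊗ₘ 𝟙 B₂) ⊗≫
        𝟙 (E.obj ((A₁ ⊗ A₃) ⊗ A₂) ⊗ (B₁ ⊗ B₂)))
      = (𝟙 (E.obj A₁ ⊗ (B₁ ⊗ (A₂ ⊗ (B₂ ⊗ A₃)))) ⊗≫
        (ΨL A₁ A₂ B₁ ⊗ₘ 𝟙 (B₂ ⊗ A₃)) ⊗≫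
        ΨL (A₁ ⊗ A₂) A₃ (B₁ ⊗ B₂) ⊗≫
        ((E.map (α_ A₁ A₂ A₃).hom ≫ E.map (𝟙 A₁ ⊗ₘ (β_ A₂ A₃).hom) ≫
            E.map (α_ A₁ A₃ A₂).inv) ⊗ₘ 𝟙 (B₁ ⊗ B₂))) := by
  have natR : ∀ (A : C) {B B' : C} (g : B ⟶ B'),
      (E.obj A ◁ g) ≫ ψL A B' = ψL A B ≫ E.map (A ◁ g) := by
    intro A B B' g
    simpa using ψL_nat (𝟙 A) g
  have ψLa' : ∀ A B C' : C, (ψL A B ▷ C') ≫ ψL (A ⊗ B) C'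
      = (α_ (E.obj A) B C').hom ≫ ψL A (B ⊗ C') ≫ E.map (α_ A B C').inv := by
    intro A B C'
    have h := ψLa A B C'
    rw [tensorHom_id] at h
    rw [← cancel_mono (E.map (α_ A B C').hom)]
    simp only [Category.assoc, ← Functor.map_comp, Iso.inv_hom_id, Functor.map_id,
      Category.comp_id]
    simpa using h
  have hσ : (𝟙 (B₁ ⊗ (A₂ ⊗ (B₂ ⊗ A₃))) ⊗≫
        ((β_ ((B₁ ⊗ A₂) ⊗ B₂) A₃).hom ≫ A₃ ◁ ((β_ B₁ A₂).hom ▷ B₂)) ⊗≫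
        𝟙 ((A₃ ⊗ A₂) ⊗ (B₁ ⊗ B₂)))
      = (𝟙 (B₁ ⊗ (A₂ ⊗ (B₂ ⊗ A₃))) ⊗≫
        ((β_ B₁ A₂).hom ▷ (B₂ ⊗ A₃)) ⊗≫
        (A₂ ◁ (β_ (B₁ ⊗ B₂) A₃).hom) ⊗≫
        ((β_ A₂ A₃).hom ▷ (B₁ ⊗ B₂)) ⊗≫
        𝟙 ((A₃ ⊗ A₂) ⊗ (B₁ ⊗ B₂))) := by
    calc 𝟙 (B₁ ⊗ (A₂ ⊗ (B₂ ⊗ A₃))) ⊗≫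
        ((β_ ((B₁ ⊗ A₂) ⊗ B₂) A₃).hom ≫ A₃ ◁ ((β_ B₁ A₂).hom ▷ B₂)) ⊗≫
        𝟙 ((A₃ ⊗ A₂) ⊗ (B₁ ⊗ B₂))
      _ = 𝟙 (B₁ ⊗ (A₂ ⊗ (B₂ ⊗ A₃))) ⊗≫
          (((β_ B₁ A₂).hom ▷ B₂) ▷ A₃ ≫ (β_ ((A₂ ⊗ B₁) ⊗ B₂) A₃).hom) ⊗≫
          𝟙 ((A₃ ⊗ A₂) ⊗ (B₁ ⊗ B₂)) := by rw [← braiding_naturality_left]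
      _ = 𝟙 (B₁ ⊗ (A₂ ⊗ (B₂ ⊗ A₃))) ⊗≫
          ((β_ B₁ A₂).hom ▷ (B₂ ⊗ A₃)) ⊗≫
          (β_ (A₂ ⊗ (B₁ ⊗ B₂)) A₃).hom ⊗≫
          𝟙 ((A₃ ⊗ A₂) ⊗ (B₁ ⊗ B₂)) := by
          simp only [braiding_tensor_left_hom]; monoidal
      _ = 𝟙 (B₁ ⊗ (A₂ ⊗ (B₂ ⊗ A₃))) ⊗≫
          ((β_ B₁ A₂).hom ▷ (B₂ ⊗ A₃)) ⊗≫
          (A₂ ◁ (β_ (B₁ ⊗ B₂) A₃).hom) ⊗≫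
          ((β_ A₂ A₃).hom ▷ (B₁ ⊗ B₂)) ⊗≫
          𝟙 ((A₃ ⊗ A₂) ⊗ (B₁ ⊗ B₂)) := by
          conv_lhs => rw [braiding_tensor_left_hom]
          monoidal
  calc
    (𝟙 (E.obj A₁ ⊗ (B₁ ⊗ (A₂ ⊗ (B₂ ⊗ A₃)))) ⊗≫
        ΨL A₁ A₃ ((B₁ ⊗ A₂) ⊗ B₂) ⊗≫
        (ΨL (A₁ ⊗ A₃) A₂ B₁ ⊗ₘ 𝟙 B₂) ⊗≫
        𝟙 (E.obj ((A₁ ⊗ A₃) ⊗ A₂) ⊗ (B₁ ⊗ B₂)))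
      = 𝟙 (E.obj A₁ ⊗ (B₁ ⊗ (A₂ ⊗ (B₂ ⊗ A₃)))) ⊗≫
        (E.obj A₁ ◁ (β_ ((B₁ ⊗ A₂) ⊗ B₂) A₃).hom) ⊗≫
        ((ψL A₁ A₃ ▷ ((B₁ ⊗ A₂) ⊗ B₂)) ≫
          (E.obj (A₁ ⊗ A₃) ◁ ((β_ B₁ A₂).hom ▷ B₂))) ⊗≫
        ((ψL (A₁ ⊗ A₃) A₂ ▷ B₁) ▷ B₂) ⊗≫
        𝟙 (E.obj ((A₁ ⊗ A₃) ⊗ A₂) ⊗ (B₁ ⊗ B₂)) := by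
        rw [hΨL, hΨL]; monoidal
    _ = 𝟙 (E.obj A₁ ⊗ (B₁ ⊗ (A₂ ⊗ (B₂ ⊗ A₃)))) ⊗≫
        (E.obj A₁ ◁ (β_ ((B₁ ⊗ A₂) ⊗ B₂) A₃).hom) ⊗≫
        (((E.obj A₁ ⊗ A₃) ◁ ((β_ B₁ A₂).hom ▷ B₂)) ≫
          (ψL A₁ A₃ ▷ ((A₂ ⊗ B₁) ⊗ B₂))) ⊗≫
        ((ψL (A₁ ⊗ A₃) A₂ ▷ B₁) ▷ B₂) ⊗≫
        𝟙 (E.obj ((A₁ ⊗ A₃) ⊗ A₂) ⊗ (B₁ ⊗ B₂)) := by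
        rw [← whisker_exchange]
    _ = 𝟙 (E.obj A₁ ⊗ (B₁ ⊗ (A₂ ⊗ (B₂ ⊗ A₃)))) ⊗≫
        (E.obj A₁ ◁ (𝟙 (B₁ ⊗ (A₂ ⊗ (B₂ ⊗ A₃))) ⊗≫
          ((β_ ((B₁ ⊗ A₂) ⊗ B₂) A₃).hom ≫ A₃ ◁ ((β_ B₁ A₂).hom ▷ B₂)) ⊗≫
          𝟙 ((A₃ ⊗ A₂) ⊗ (B₁ ⊗ B₂)))) ⊗≫
        (((ψL A₁ A₃ ▷ A₂) ≫ ψL (A₁ ⊗ A₃) A₂) ▷ (B₁ ⊗ B₂)) ⊗≫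
        𝟙 (E.obj ((A₁ ⊗ A₃) ⊗ A₂) ⊗ (B₁ ⊗ B₂)) := by
        monoidal
    _ = 𝟙 (E.obj A₁ ⊗ (B₁ ⊗ (A₂ ⊗ (B₂ ⊗ A₃)))) ⊗≫
        (E.obj A₁ ◁ (𝟙 (B₁ ⊗ (A₂ ⊗ (B₂ ⊗ A₃))) ⊗≫
          ((β_ B₁ A₂).hom ▷ (B₂ ⊗ A₃)) ⊗≫
          (A₂ ◁ (β_ (B₁ ⊗ B₂) A₃).hom) ⊗≫
          ((β_ A₂ A₃).hom ▷ (B₁ ⊗ B₂)) ⊗≫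
          𝟙 ((A₃ ⊗ A₂) ⊗ (B₁ ⊗ B₂)))) ⊗≫
        (((α_ (E.obj A₁) A₃ A₂).hom ≫ ψL A₁ (A₃ ⊗ A₂) ≫
          E.map (α_ A₁ A₃ A₂).inv) ▷ (B₁ ⊗ B₂)) ⊗≫
        𝟙 (E.obj ((A₁ ⊗ A₃) ⊗ A₂) ⊗ (B₁ ⊗ B₂)) := by
        rw [ψLa', hσ]
    _ = 𝟙 (E.obj A₁ ⊗ (B₁ ⊗ (A₂ ⊗ (B₂ ⊗ A₃)))) ⊗≫
        (E.obj A₁ ◁ ((β_ B₁ A₂).hom ▷ (B₂ ⊗ A₃))) ⊗≫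
        (E.obj A₁ ◁ (A₂ ◁ (β_ (B₁ ⊗ B₂) A₃).hom)) ⊗≫
        (((E.obj A₁ ◁ (β_ A₂ A₃).hom ≫ ψL A₁ (A₃ ⊗ A₂)) ≫
          E.map (α_ A₁ A₃ A₂).inv) ▷ (B₁ ⊗ B₂)) ⊗≫
        𝟙 (E.obj ((A₁ ⊗ A₃) ⊗ A₂) ⊗ (B₁ ⊗ B₂)) := by
        monoidal
    _ = 𝟙 (E.obj A₁ ⊗ (B₁ ⊗ (A₂ ⊗ (B₂ ⊗ A₃)))) ⊗≫
        (E.obj A₁ ◁ ((β_ B₁ A₂).hom ▷ (B₂ ⊗ A₃))) ⊗≫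
        (E.obj A₁ ◁ (A₂ ◁ (β_ (B₁ ⊗ B₂) A₃).hom)) ⊗≫
        (((ψL A₁ (A₂ ⊗ A₃) ≫ E.map (A₁ ◁ (β_ A₂ A₃).hom)) ≫
          E.map (α_ A₁ A₃ A₂).inv) ▷ (B₁ ⊗ B₂)) ⊗≫
        𝟙 (E.obj ((A₁ ⊗ A₃) ⊗ A₂) ⊗ (B₁ ⊗ B₂)) := by
        rw [natR]
    _ = 𝟙 (E.obj A₁ ⊗ (B₁ ⊗ (A₂ ⊗ (B₂ ⊗ A₃)))) ⊗≫
        (E.obj A₁ ◁ ((β_ B₁ A₂).hom ▷ (B₂ ⊗ A₃))) ⊗≫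
        (E.obj A₁ ◁ (A₂ ◁ (β_ (B₁ ⊗ B₂) A₃).hom)) ⊗≫
        ((((α_ (E.obj A₁) A₂ A₃).hom ≫ ψL A₁ (A₂ ⊗ A₃) ≫ E.map (α_ A₁ A₂ A₃).inv) ≫
          (E.map (α_ A₁ A₂ A₃).hom ≫ E.map (𝟙 A₁ ⊗ₘ (β_ A₂ A₃).hom) ≫
            E.map (α_ A₁ A₃ A₂).inv)) ▷ (B₁ ⊗ B₂)) ⊗≫
        𝟙 (E.obj ((A₁ ⊗ A₃) ⊗ A₂) ⊗ (B₁ ⊗ B₂)) := by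
        simp only [Category.assoc, ← Functor.map_comp, Iso.inv_hom_id_assoc, id_tensorHom]
        monoidal
    _ = 𝟙 (E.obj A₁ ⊗ (B₁ ⊗ (A₂ ⊗ (B₂ ⊗ A₃)))) ⊗≫
        (E.obj A₁ ◁ ((β_ B₁ A₂).hom ▷ (B₂ ⊗ A₃))) ⊗≫
        (E.obj A₁ ◁ (A₂ ◁ (β_ (B₁ ⊗ B₂) A₃).hom)) ⊗≫
        ((((ψL A₁ A₂ ▷ A₃) ≫ ψL (A₁ ⊗ A₂) A₃) ≫
          (E.map (α_ A₁ A₂ A₃).hom ≫ E.map (𝟙 A₁ ⊗ₘ (β_ A₂ A₃).hom) ≫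
            E.map (α_ A₁ A₃ A₂).inv)) ▷ (B₁ ⊗ B₂)) ⊗≫
        𝟙 (E.obj ((A₁ ⊗ A₃) ⊗ A₂) ⊗ (B₁ ⊗ B₂)) := by
        rw [ψLa']
    _ = 𝟙 (E.obj A₁ ⊗ (B₁ ⊗ (A₂ ⊗ (B₂ ⊗ A₃)))) ⊗≫
        (E.obj A₁ ◁ ((β_ B₁ A₂).hom ▷ (B₂ ⊗ A₃))) ⊗≫
        ((ψL A₁ A₂ ▷ ((B₁ ⊗ B₂) ⊗ A₃)) ≫
          (E.obj (A₁ ⊗ A₂) ◁ (β_ (B₁ ⊗ B₂) A₃).hom)) ⊗≫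
        (ψL (A₁ ⊗ A₂) A₃ ▷ (B₁ ⊗ B₂)) ⊗≫
        ((E.map (α_ A₁ A₂ A₃).hom ≫ E.map (𝟙 A₁ ⊗ₘ (β_ A₂ A₃).hom) ≫
            E.map (α_ A₁ A₃ A₂).inv) ▷ (B₁ ⊗ B₂)) ⊗≫
        𝟙 (E.obj ((A₁ ⊗ A₃) ⊗ A₂) ⊗ (B₁ ⊗ B₂)) := by
        rw [← whisker_exchange]; monoidal
    _ = (𝟙 (E.obj A₁ ⊗ (B₁ ⊗ (A₂ ⊗ (B₂ ⊗ A₃)))) ⊗≫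
        (ΨL A₁ A₂ B₁ ⊗ₘ 𝟙 (B₂ ⊗ A₃)) ⊗≫
        ΨL (A₁ ⊗ A₂) A₃ (B₁ ⊗ B₂) ⊗≫
        ((E.map (α_ A₁ A₂ A₃).hom ≫ E.map (𝟙 A₁ ⊗ₘ (β_ A₂ A₃).hom) ≫
            E.map (α_ A₁ A₃ A₂).inv) ⊗ₘ 𝟙 (B₁ ⊗ B₂))) := by
        rw [hΨL, hΨL]; monoidal


set_option maxHeartbeats 1000000 in
/-- For a left monoidal endofunctor `E` of a symmetric monoidal category, with
`Ψ^L_{A₁,A₂;B} := (ψ^L_{A₁,A₂} ⊗ 1_B) ∘ a⁻¹ ∘ (1_{EA₁} ⊗ c_{B,A₂}) ∘ a`, the equation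
(Ψ^LΨ^L) holds (structural coherence isomorphisms inserted via `⊗≫`). -/
theorem PsiLPsiL {C : Type*} [Category C] [MonoidalCategory C] [SymmetricCategory C]
    (E : C ⥤ C)
    (ψL : ∀ A B : C, E.obj A ⊗ B ⟶ E.obj (A ⊗ B))
    (ψL_nat : ∀ {A A' B B' : C} (f : A ⟶ A') (g : B ⟶ B'),
      (E.map f ⊗ₘ g) ≫ ψL A' B' = ψL A B ≫ E.map (f ⊗ₘ g))
    (ψLa : ∀ A B C' : C,
      (ψL A B ⊗ₘ 𝟙 C') ≫ ψL (A ⊗ B) C' ≫ E.map (α_ A B C').hom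
        = (α_ (E.obj A) B C').hom ≫ ψL A (B ⊗ C'))
    (ψLr : ∀ A : C, ψL A (𝟙_ C) ≫ E.map (ρ_ A).hom = (ρ_ (E.obj A)).hom)
    (ΨL : ∀ A₁ A₂ B : C, (E.obj A₁ ⊗ B) ⊗ A₂ ⟶ E.obj (A₁ ⊗ A₂) ⊗ B)
    (hΨL : ∀ A₁ A₂ B : C,
      ΨL A₁ A₂ B = (α_ (E.obj A₁) B A₂).hom ≫
        (𝟙 (E.obj A₁) ⊗ₘ (β_ B A₂).hom) ≫
        (α_ (E.obj A₁) A₂ B).inv ≫ (ψL A₁ A₂ ⊗ₘ 𝟙 B)) :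
    ∀ A₁ A₂ A₃ B₁ B₂ : C,
      (𝟙 (E.obj A₁ ⊗ (B₁ ⊗ (A₂ ⊗ (B₂ ⊗ A₃)))) ⊗≫
        ΨL A₁ A₃ ((B₁ ⊗ A₂) ⊗ B₂) ⊗≫
        (ΨL (A₁ ⊗ A₃) A₂ B₁ ⊗ₘ 𝟙 B₂) ⊗≫
        𝟙 (E.obj ((A₁ ⊗ A₃) ⊗ A₂) ⊗ (B₁ ⊗ B₂)))
      = (𝟙 (E.obj A₁ ⊗ (B₁ ⊗ (A₂ ⊗ (B₂ ⊗ A₃)))) ⊗≫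
        (ΨL A₁ A₂ B₁ ⊗ₘ 𝟙 (B₂ ⊗ A₃)) ⊗≫
        ΨL (A₁ ⊗ A₂) A₃ (B₁ ⊗ B₂) ⊗≫
        ((E.map (α_ A₁ A₂ A₃).hom ≫ E.map (𝟙 A₁ ⊗ₘ (β_ A₂ A₃).hom) ≫
            E.map (α_ A₁ A₃ A₂).inv) ⊗ₘ 𝟙 (B₁ ⊗ B₂))) := by
  intro A₁ A₂ A₃ B₁ B₂
  exact PsiLPsiL_aux E ψL ψL_nat ψLa ΨL hΨL A₁ A₂ A₃ B₁ B₂
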